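/- Let A be a bialgebra over k and A⁰ its Sweedler dual (functionals with finite-dimensional orbit under translation). Then the transpose of the multiplication maps A⁰ into A⁰ ⊗ A⁰: for every f ∈ A⁰ there exist g₁,…,gₙ, h₁,…,hₙ ∈ A⁰ (not merely in A^∨) with f(xy) = Σᵢ gᵢ(x)hᵢ(y) for all x, y ∈ A. -/

import Mathlib

open LinearMap Submodule

/-- Membership in the Sweedler dual. -/
def InSweedlerDual (k : Type*) [Field k] {A : Type*} [Ring A] [Algebra k A]
    (f : Module.Dual k A) : Prop :=
  FiniteDimensional k
    (Submodule.span k (Set.range fun s : A => f ∘ₗ LinearMap.mulRight k s))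

/-- If all right translates of `ψ` lie in a finite-dimensional submodule, then
`ψ` lies in the Sweedler dual. -/
theorem inSweedlerDual_of_le (k : Type*) [Field k] {A : Type*} [Ring A] [Algebra k A]
    (ψ : Module.Dual k A) (W : Submodule k (Module.Dual k A)) [FiniteDimensional k W]
    (h : ∀ s : A, ψ ∘ₗ LinearMap.mulRight k s ∈ W) : InSweedlerDual k ψ := by
  have hle : Submodule.span k (Set.range fun s : A => ψ ∘ₗ LinearMap.mulRight k s) ≤ W := by
    rw [Submodule.span_le]
    rintro _ ⟨s, rfl⟩
    exact h s
  exact Submodule.finiteDimensional_of_le hle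

/-- the transpose of multiplication maps `A⁰` into `A⁰ ⊗ A⁰`: every
`f ∈ A⁰` factors as `f(xy) = Σᵢ gᵢ(x)hᵢ(y)` with all `gᵢ, hᵢ ∈ A⁰`. -/
theorem sweedlerDual_comul (k : Type*) [Field k] (A : Type*) [Ring A] [Bialgebra k A]
    (f : Module.Dual k A) (hf : InSweedlerDual k f) :
    ∃ (n : ℕ) (g h : Fin n → Module.Dual k A),
      (∀ i, InSweedlerDual k (g i)) ∧ (∀ i, InSweedlerDual k (h i)) ∧
      ∀ x y : A, f (x * y) = ∑ i, g i x * h i y := by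
  classical
  set V := Submodule.span k (Set.range fun s : A => f ∘ₗ LinearMap.mulRight k s) with hV
  haveI : FiniteDimensional k V := hf
  -- V is stable under right translation
  have stab : ∀ φ ∈ V, ∀ s : A, φ ∘ₗ LinearMap.mulRight k s ∈ V := by
    intro φ hφ s
    induction hφ using Submodule.span_induction with
    | mem x hx =>
        obtain ⟨t, rfl⟩ := hx
        have : (f ∘ₗ LinearMap.mulRight k t) ∘ₗ LinearMap.mulRight k s
            = f ∘ₗ LinearMap.mulRight k (s * t) := by
          ext x; simp [mul_assoc]
        rw [this]
        exact Submodule.subset_span ⟨s * t, rfl⟩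
    | zero => exact Submodule.zero_mem V
    | add x y hx hy ihx ihy =>
        have : (x + y) ∘ₗ LinearMap.mulRight k s
            = x ∘ₗ LinearMap.mulRight k s + y ∘ₗ LinearMap.mulRight k s := by
          ext z; simp
        rw [this]; exact Submodule.add_mem V ihx ihy
    | smul a x hx ih =>
        have : (a • x) ∘ₗ LinearMap.mulRight k s = a • (x ∘ₗ LinearMap.mulRight k s) := by
          ext z; simp
        rw [this]; exact Submodule.smul_mem V a ih
  have f_mem : f ∈ V := by
    have : f = f ∘ₗ LinearMap.mulRight k (1 : A) := by ext x; simp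
    rw [this]; exact Submodule.subset_span ⟨1, rfl⟩
  -- translation operators as maps A →ₗ V, depending on an element of V
  let w : V → (A →ₗ[k] V) := fun φ =>
    { toFun := fun y => ⟨(φ : Module.Dual k A) ∘ₗ LinearMap.mulRight k y, stab φ φ.2 y⟩
      map_add' := by
        intro y z
        apply Subtype.ext
        show (φ : Module.Dual k A) ∘ₗ LinearMap.mulRight k (y + z)
          = (φ : Module.Dual k A) ∘ₗ LinearMap.mulRight k y
            + (φ : Module.Dual k A) ∘ₗ LinearMap.mulRight k z
        ext x; simp [mul_add]
      map_smul' := by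
        intro c y
        apply Subtype.ext
        show (φ : Module.Dual k A) ∘ₗ LinearMap.mulRight k (c • y)
          = c • ((φ : Module.Dual k A) ∘ₗ LinearMap.mulRight k y)
        ext x; simp [mul_smul_comm] }
  haveI : Module.Free k V := Module.Free.of_divisionRing k V
  set n := Module.finrank k V with hn
  let b : Module.Basis (Fin n) k V := Module.finBasis k V
  let fv : V := ⟨f, f_mem⟩
  refine ⟨n, fun i => ((b i : V) : Module.Dual k A),
    fun i => b.coord i ∘ₗ w fv, ?_, ?_, ?_⟩
  · -- each gᵢ is in the Sweedler dual
    intro i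
    exact inSweedlerDual_of_le k _ V (fun s => stab _ (b i).2 s)
  · -- each hᵢ is in the Sweedler dual
    intro i
    set W : Submodule k (Module.Dual k A) :=
      Submodule.span k (Set.range fun p : Fin n × Fin n => b.coord p.1 ∘ₗ w (b p.2)) with hW
    haveI : FiniteDimensional k W := FiniteDimensional.span_of_finite k (Set.finite_range _)
    refine inSweedlerDual_of_le k _ W (fun s => ?_)
    have key : (b.coord i ∘ₗ w fv) ∘ₗ LinearMap.mulRight k s
        = ∑ j, b.repr ⟨f ∘ₗ LinearMap.mulRight k s, stab f f_mem s⟩ j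
            • (b.coord i ∘ₗ w (b j)) := by
      ext y
      set fs : V := ⟨f ∘ₗ LinearMap.mulRight k s, stab f f_mem s⟩ with hfs
      have h1 : w fv (y * s) = w fs y := by
        apply Subtype.ext
        show f ∘ₗ LinearMap.mulRight k (y * s)
          = (f ∘ₗ LinearMap.mulRight k s) ∘ₗ LinearMap.mulRight k y
        ext x; simp [mul_assoc]
      have h2 : w fs y = ∑ j, b.repr fs j • w (b j) y := by
        apply Subtype.ext
        have hfs2 : (fs : Module.Dual k A)
            = ∑ j, b.repr fs j • ((b j : V) : Module.Dual k A) := by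
          conv_lhs => rw [← b.sum_repr fs]
          push_cast
          rfl
        show (fs : Module.Dual k A) ∘ₗ LinearMap.mulRight k y
          = ((∑ j, b.repr fs j • w (b j) y : V) : Module.Dual k A)
        rw [hfs2]
        push_cast
        ext x
        simp [w]
      show b.coord i (w fv (y * s)) = _
      rw [h1, h2]
      simp [Finset.mul_sum]
    rw [key]
    exact Submodule.sum_mem W fun j _ =>
      Submodule.smul_mem W _ (Submodule.subset_span ⟨(i, j), rfl⟩)
  · -- the factorization identity
    intro x y
    have h2 : ((w fv y : V) : Module.Dual k A)
        = ∑ i, b.repr (w fv y) i • ((b i : V) : Module.Dual k A) := by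
      conv_lhs => rw [← b.sum_repr (w fv y)]
      push_cast
      rfl
    have h1 : f (x * y) = ((w fv y : V) : Module.Dual k A) x := rfl
    rw [h1, h2, LinearMap.sum_apply]
    refine Finset.sum_congr rfl fun i _ => ?_
    rw [LinearMap.smul_apply]
    show b.repr (w fv y) i • ((b i : V) : Module.Dual k A) x
      = ((b i : V) : Module.Dual k A) x * b.coord i (w fv y)
    rw [smul_eq_mul, mul_comm]
    rfl
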